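/- (Swapping lemma instance.) Let λ > 0 and let V, I, w, z, r : ℝ → ℝ be differentiable functions satisfying, for all t ≥ 0: w′(t) = λ·(V′(t) − w(t)), z′(t) = λ·(V′(t)·I(t) − z(t)), r′(t) = I′(t)·w(t) − λ·r(t), together with the initial condition z(0) = I(0)·w(0) − r(0). Then z(t) = I(t)·w(t) − r(t) for all t ≥ 0. -/

import Mathlib

theorem swapping_lemma_instance
    (lam : ℝ) (hlam : 0 < lam)
    (V I w z r : ℝ → ℝ)
    (hV : Differentiable ℝ V) (hI : Differentiable ℝ I)
    (hw : Differentiable ℝ w) (hz : Differentiable ℝ z)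
    (hr : Differentiable ℝ r)
    (hw' : ∀ t ≥ (0:ℝ), deriv w t = lam * (deriv V t - w t))
    (hz' : ∀ t ≥ (0:ℝ), deriv z t = lam * (deriv V t * I t - z t))
    (hr' : ∀ t ≥ (0:ℝ), deriv r t = deriv I t * w t - lam * r t)
    (h0 : z 0 = I 0 * w 0 - r 0) :
    ∀ t ≥ (0:ℝ), z t = I t * w t - r t := by
  intro t ht
  set h : ℝ → ℝ := fun s => (z s - (I s * w s - r s)) * Real.exp (lam * s) with hh
  have hcont : ContinuousOn h (Set.Icc 0 t) := by
    apply Continuous.continuousOn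
    exact ((hz.continuous.sub ((hI.continuous.mul hw.continuous).sub hr.continuous)).mul
      (Real.continuous_exp.comp (continuous_const.mul continuous_id)))
  have hderiv : ∀ x ∈ Set.Ico (0:ℝ) t, HasDerivWithinAt h 0 (Set.Ici x) x := by
    intro x hx
    have hx0 : (0:ℝ) ≤ x := hx.1
    have h1 : HasDerivAt (fun s => z s - (I s * w s - r s))
        (deriv z x - (deriv I x * w x + I x * deriv w x - deriv r x)) x :=
      (hz x).hasDerivAt.sub (((hI x).hasDerivAt.mul (hw x).hasDerivAt).sub (hr x).hasDerivAt)
    have h2 : HasDerivAt (fun s => Real.exp (lam * s)) (Real.exp (lam * x) * lam) x := by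
      simpa using (((hasDerivAt_id x).const_mul lam).exp)
    have h3 := h1.mul h2
    have hval : (deriv z x - (deriv I x * w x + I x * deriv w x - deriv r x)) * Real.exp (lam * x)
        + (z x - (I x * w x - r x)) * (Real.exp (lam * x) * lam) = 0 := by
      rw [hz' x hx0, hw' x hx0, hr' x hx0]; ring
    have h4 : HasDerivAt h 0 x := by
      rw [hh]
      convert h3 using 1
      · rfl
      · rfl
      · rfl
      · linarith [hval]
    exact h4.hasDerivWithinAt
  have hconst := constant_of_has_deriv_right_zero hcont hderiv t (Set.mem_Icc.mpr ⟨ht, le_refl t⟩)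
  have hz0 : h 0 = 0 := by simp [hh, h0]
  have : (z t - (I t * w t - r t)) * Real.exp (lam * t) = 0 := by
    have : h t = 0 := by rw [hconst, hz0]
    simpa [hh] using this
  have hne : Real.exp (lam * t) ≠ 0 := Real.exp_ne_zero _
  have := mul_eq_zero.mp this
  rcases this with h' | h'
  · linarith
  · exact absurd h' hne
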